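/- The cone Cone_{d,θ}(e,v) in a graph is contained in the union of cones of angle θ and radius 1 centered at edges both of whose endpoints lie in Cone_{d−1,θ}(e,v), for d > 1. Consequently, finiteness of cones follows by induction on the radius. -/

import Mathlib

/-- The angle at `v` between edges `(v,v1)` and `(v,v2)`: the length of a shortest
path from `v1` to `v2` avoiding the vertex `v` (`⊤` if there is none). -/
noncomputable def ang {V : Type*} (G : SimpleGraph V) (v v1 v2 : V) : ℕ∞ :=
  ⨅ (p : G.Walk v1 v2) (_ : v ∉ p.support), (p.length : ℕ∞)

/-- The cone of radius `d` and angle `θ` centred at the edge `(v,v')` (with apex `v`). -/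
noncomputable def cone {V : Type*} (G : SimpleGraph V) (d θ : ℕ) (v v' : V) : Set V :=
  {w : V | ∃ p : G.Walk v w, p.length = G.dist v w ∧ p.length ≤ d ∧
    (∀ i, 0 < i → i < p.length →
      ang G (p.getVert i) (p.getVert (i - 1)) (p.getVert (i + 1)) ≤ (θ : ℕ∞)) ∧
    (p.length = 0 ∨ ang G v v' (p.getVert 1) ≤ (θ : ℕ∞))}

namespace ConeAux

variable {V : Type*} {G : SimpleGraph V}

/-- Take the first `n` edges of a walk. -/
def myTake : ∀ {u v : V} (p : G.Walk u v) (n : ℕ), G.Walk u (p.getVert n)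
  | _, _, .nil, _ => .nil
  | _, _, .cons _ _, 0 => .nil
  | _, _, .cons h q, (n + 1) => .cons h (myTake q n)

lemma myTake_length : ∀ {u v : V} (p : G.Walk u v) (n : ℕ),
    (myTake p n).length = min n p.length
  | _, _, .nil, n => by simp [myTake]
  | _, _, .cons _ _, 0 => by simp [myTake]; rfl
  | _, _, .cons h q, (n + 1) => by
      simp only [myTake, SimpleGraph.Walk.length_cons, myTake_length q n]
      erw [SimpleGraph.Walk.length_cons, myTake_length q n]
      omega

lemma myTake_getVert : ∀ {u v : V} (p : G.Walk u v) (n i : ℕ), i ≤ n →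
    (myTake p n).getVert i = p.getVert i
  | _, _, .nil, n, i, _ => by
      simp [myTake, SimpleGraph.Walk.getVert]
  | _, _, .cons _ _, 0, i, hi => by
      interval_cases i
      simp [myTake]
      rfl
  | _, _, .cons h q, (n + 1), 0, _ => by simp [myTake]
  | _, _, .cons h q, (n + 1), (i + 1), hi => by
      simpa [myTake] using myTake_getVert q n i (by omega)

/-- Drop the first `n` edges of a walk. -/
def myDrop : ∀ {u v : V} (p : G.Walk u v) (n : ℕ), G.Walk (p.getVert n) v
  | _, _, .nil, _ => .nil
  | _, _, .cons h q, 0 => .cons h q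
  | _, _, .cons _ q, (n + 1) => myDrop q n

lemma myDrop_length : ∀ {u v : V} (p : G.Walk u v) (n : ℕ),
    (myDrop p n).length = p.length - n
  | _, _, .nil, n => by simp [myDrop]
  | _, _, .cons h q, 0 => by simp [myDrop]; rfl
  | _, _, .cons h q, (n + 1) => by
      simp only [myDrop, SimpleGraph.Walk.length_cons, myDrop_length q n]
      erw [myDrop_length q n]
      omega

/-- Vertices along a geodesic satisfying the cone angle conditions are in the cone. -/
lemma getVert_mem_cone (G : SimpleGraph V) (d θ : ℕ) (v v' w : V)
    (p : G.Walk v w) (hlen : p.length = G.dist v w)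
    (hang : ∀ i, 0 < i → i < p.length →
      ang G (p.getVert i) (p.getVert (i - 1)) (p.getVert (i + 1)) ≤ (θ : ℕ∞))
    (hfirst : p.length = 0 ∨ ang G v v' (p.getVert 1) ≤ (θ : ℕ∞))
    (k : ℕ) (hk : k ≤ p.length) (hkd : k ≤ d) :
    p.getVert k ∈ cone G d θ v v' := by
  refine ⟨myTake p k, ?_, ?_, ?_, ?_⟩
  · -- geodesic
    have hq : (myTake p k).length = k := by rw [myTake_length]; omega
    rw [hq]
    have h1 : G.dist v (p.getVert k) ≤ k := by
      have := SimpleGraph.dist_le (myTake p k)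
      omega
    have h2 : k ≤ G.dist v (p.getVert k) := by
      -- compose a shortest walk v → getVert k with the suffix of p
      have hr : G.Reachable v (p.getVert k) := ⟨myTake p k⟩
      obtain ⟨q, hq'⟩ := hr.exists_walk_length_eq_dist
      have := SimpleGraph.dist_le (q.append (myDrop p k))
      rw [SimpleGraph.Walk.length_append, hq', myDrop_length] at this
      omega
    omega
  · rw [myTake_length]; omega
  · intro i hi hilt
    rw [myTake_length] at hilt
    have hik : i < k := by omega
    rw [myTake_getVert p k i (by omega), myTake_getVert p k (i - 1) (by omega),
      myTake_getVert p k (i + 1) (by omega)]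
    exact hang i hi (by omega)
  · rcases Nat.eq_zero_or_pos k with hk0 | hk0
    · left; rw [myTake_length]; omega
    · right
      rw [myTake_getVert p k 1 (by omega)]
      rcases hfirst with h0 | h0
      · omega
      · exact h0

lemma ang_self_le (G : SimpleGraph V) (v x : V) (hvx : v ≠ x) (θ : ℕ) :
    ang G v x x ≤ (θ : ℕ∞) := by
  have h1 : ang G v x x ≤ ((SimpleGraph.Walk.nil : G.Walk x x).length : ℕ∞) :=
    iInf₂_le SimpleGraph.Walk.nil (by simp [hvx])
  exact le_trans h1 (by simp)

end ConeAux

open ConeAux in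
/-- For `d > 1`, the cone of radius `d` is contained in the union of the cones of
radius `1` and angle `θ` centred at edges both of whose endpoints lie in the cone of
radius `d - 1`. -/
theorem stmt5 {V : Type*} (G : SimpleGraph V) (d θ : ℕ) (hd : 1 < d) (v v' : V)
    (h : G.Adj v v') :
    cone G d θ v v' ⊆
      ⋃ (a : V) (b : V) (_ : G.Adj a b) (_ : a ∈ cone G (d - 1) θ v v')
        (_ : b ∈ cone G (d - 1) θ v v'), cone G 1 θ a b := by
  intro w hw
  obtain ⟨p, h1, h2, h3, h4⟩ := hw
  simp only [Set.mem_iUnion]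
  -- v is in the small cone
  have hv : v ∈ cone G (d - 1) θ v v' :=
    ⟨.nil, by simp [SimpleGraph.dist_self], by simp, by simp, Or.inl rfl⟩
  -- v' is in the small cone
  have hv' : v' ∈ cone G (d - 1) θ v v' := by
    refine ⟨.cons h .nil, ?_, by simp only [SimpleGraph.Walk.length_cons,
        SimpleGraph.Walk.length_nil]; omega, by intro i hi hilt; simp at hilt; omega,
        Or.inr ?_⟩
    · simpa using ((SimpleGraph.dist_eq_one_iff_adj).2 h).symm
    · -- ang G v v' v' = 0
      have hgv : (SimpleGraph.Walk.cons h SimpleGraph.Walk.nil).getVert 1 = v' := rfl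
      rw [hgv]
      exact ang_self_le G v v' h.ne θ
  set n := p.length with hn
  rcases Nat.lt_or_ge n 2 with hlt | hge
  · -- n = 0 or n = 1 : use the edge (v, v')
    refine ⟨v, v', h, hv, hv', ?_⟩
    interval_cases n
    · -- w = v
      have hvw : v = w := p.eq_of_length_eq_zero hn.symm
      subst hvw
      exact ⟨.nil, by simp [SimpleGraph.dist_self], by simp, by simp, Or.inl rfl⟩
    · refine ⟨p, by omega, by omega, fun i hi hilt => by omega, ?_⟩
      rcases h4 with h0 | h0
      · omega
      · exact Or.inr h0
  · -- n ≥ 2 : use the edge (getVert (n-1), getVert (n-2))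
    have hnd : n ≤ d := h2
    have hadj : G.Adj (p.getVert (n - 1)) (p.getVert (n - 2)) := by
      have := p.adj_getVert_succ (i := n - 2) (by omega)
      have heq : n - 2 + 1 = n - 1 := by omega
      rw [heq] at this
      exact this.symm
    refine ⟨p.getVert (n - 1), p.getVert (n - 2), hadj, ?_, ?_, ?_⟩
    · exact getVert_mem_cone G (d - 1) θ v v' w p h1 h3 h4 (n - 1) (by omega) (by omega)
    · exact getVert_mem_cone G (d - 1) θ v v' w p h1 h3 h4 (n - 2) (by omega) (by omega)
    · -- w ∈ cone 1 θ a b via the last edge of p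
      have hw' : p.getVert n = w := by rw [hn]; exact p.getVert_length
      have hadj2 : G.Adj (p.getVert (n - 1)) w := by
        have := p.adj_getVert_succ (i := n - 1) (by omega)
        have heq : n - 1 + 1 = n := by omega
        rw [heq, hw'] at this
        exact this
      refine ⟨.cons hadj2 .nil, ?_, by simp, by intro i hi hilt; simp at hilt; omega,
        Or.inr ?_⟩
      · simpa using ((SimpleGraph.dist_eq_one_iff_adj).2 hadj2).symm
      · have hgv : (SimpleGraph.Walk.cons hadj2 SimpleGraph.Walk.nil).getVert 1 = w := rfl
        rw [hgv]
        have := h3 (n - 1) (by omega) (by omega)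
        have heq : n - 1 + 1 = n := by omega
        rw [heq, hw'] at this
        exact this
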